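/- Let A be a tensor in ℝ^{n_L × n_N × n_R} with two standard representations (Q_L, Σ_L, N, Σ_R, Q_R) and (Q̃_L, Σ_L, Ñ, Σ_R, Q̃_R) (both satisfying the SVD conditions of the standard representation). Then there exist orthogonal matrices w₁ and w₂, each commuting with Σ_L and Σ_R respectively (in particular, block diagonal with respect to groups of equal singular values), such that Q̃_L = Q_L w₁, Q̃_R = w₂ᵀ Q_R, and Ñ(j) = w₁ᵀ N(j) w₂ for all j. -/

import Mathlib

open Matrix

def lunf {n k1 k2 : ℕ} (H : Fin n → Matrix (Fin k1) (Fin k2) ℝ) :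
    Matrix (Fin k1 × Fin n) (Fin k2) ℝ := Matrix.of fun p q => H p.2 p.1 q

def runf {n k1 k2 : ℕ} (H : Fin n → Matrix (Fin k1) (Fin k2) ℝ) :
    Matrix (Fin k1) (Fin n × Fin k2) ℝ := Matrix.of fun l p => H p.1 l p.2

/-- `(Q_L, Σ_L, N, Σ_R, Q_R)` is a standard representation of the tensor `A`:
`A(i,j,k) = (Q_L Σ_L N(j) Σ_R Q_R)_{i,k}`, `Q_L Σ_L (runf (N Σ_R Q_R))` is a
truncated SVD of `A^{(1)}` and `(lunf (Q_L Σ_L N)) Σ_R Q_R` one of `A^{(1,2)}`. -/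
def IsStdRep {nL nN nR rL rR : ℕ} (A : Fin nL → Fin nN → Fin nR → ℝ)
    (QL : Matrix (Fin nL) (Fin rL) ℝ) (sL : Fin rL → ℝ)
    (N : Fin nN → Matrix (Fin rL) (Fin rR) ℝ) (sR : Fin rR → ℝ)
    (QR : Matrix (Fin rR) (Fin nR) ℝ) : Prop :=
  (∀ i j k, A i j k = (QL * Matrix.diagonal sL * N j * Matrix.diagonal sR * QR) i k) ∧
  QLᵀ * QL = 1 ∧
  (runf fun j => N j * Matrix.diagonal sR * QR) *
    (runf fun j => N j * Matrix.diagonal sR * QR)ᵀ = 1 ∧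
  (lunf fun j => QL * Matrix.diagonal sL * N j)ᵀ *
    (lunf fun j => QL * Matrix.diagonal sL * N j) = 1 ∧
  QR * QRᵀ = 1

section aux
variable {m n r : Type*} [Fintype m] [Fintype n] [Fintype r] [DecidableEq r]

lemma diag_inv_right (σ : r → ℝ) (hσ : ∀ a, σ a ≠ 0) :
    Matrix.diagonal σ * Matrix.diagonal (fun a => (σ a)⁻¹) = 1 := by
  rw [diagonal_mul_diagonal]
  convert diagonal_one using 2
  ext a
  exact mul_inv_cancel₀ (hσ a)

lemma svd_unique (σ : r → ℝ) (hσ : ∀ a, 0 < σ a)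
    (U Ut : Matrix m r ℝ) (M Mt : Matrix r n ℝ)
    (hU : Uᵀ * U = 1) (hUt : Utᵀ * Ut = 1)
    (hM : M * Mᵀ = 1) (hMt : Mt * Mtᵀ = 1)
    (heq : U * diagonal σ * M = Ut * diagonal σ * Mt) :
    ∃ w : Matrix r r ℝ, wᵀ * w = 1 ∧ w * diagonal σ = diagonal σ * w ∧
      Ut = U * w ∧ Mt = wᵀ * M := by
  set D : Matrix r r ℝ := diagonal σ with hDdef
  set E : Matrix r r ℝ := diagonal (fun a => (σ a)⁻¹) with hEdef
  have hDT : Dᵀ = D := diagonal_transpose σ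
  set w : Matrix r r ℝ := Uᵀ * Ut with hwdef
  have hσne : ∀ a, σ a ≠ 0 := fun a => (hσ a).ne'
  have hDE : D * E = 1 := diag_inv_right σ hσne
  have hED : E * D = 1 := by
    rw [hDdef, hEdef, diagonal_mul_diagonal]
    convert diagonal_one using 2
    ext a
    exact inv_mul_cancel₀ (hσne a)
  have key : ∀ (X : Matrix m r ℝ) (Y : Matrix r n ℝ), Y * Yᵀ = 1 →
      (X * D * Y) * (X * D * Y)ᵀ = X * D * D * Xᵀ := by
    intro X Y hY
    rw [transpose_mul, transpose_mul, hDT]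
    simp only [← Matrix.mul_assoc]
    rw [Matrix.mul_assoc (X * D) Y Yᵀ, hY, Matrix.mul_one]
  have hC : U * D * D * Uᵀ = Ut * D * D * Utᵀ := by
    rw [← key U M hM, ← key Ut Mt hMt, heq]
  have hcomm2 : w * (D * D) = (D * D) * w := by
    calc w * (D * D) = Uᵀ * Ut * (D * D) * (Utᵀ * Ut) := by rw [hUt, Matrix.mul_one]
    _ = Uᵀ * (Ut * D * D * Utᵀ) * Ut := by simp only [Matrix.mul_assoc]
    _ = Uᵀ * (U * D * D * Uᵀ) * Ut := by rw [hC]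
    _ = (Uᵀ * U) * (D * D) * (Uᵀ * Ut) := by simp only [Matrix.mul_assoc]
    _ = (D * D) * w := by rw [hU, Matrix.one_mul]
  have hcomm : w * D = D * w := by
    ext a b
    have h2 := congrFun (congrFun hcomm2 a) b
    rw [hDdef, diagonal_mul_diagonal] at h2
    rw [Matrix.mul_diagonal, Matrix.diagonal_mul] at h2
    rw [hDdef, Matrix.mul_diagonal, Matrix.diagonal_mul]
    rcases eq_or_ne (w a b) 0 with h0 | h0
    · simp [h0]
    · have hsq : σ b * σ b = σ a * σ a := by
        have : w a b * (σ b * σ b) = w a b * (σ a * σ a) := by linarith [h2]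
        exact mul_left_cancel₀ h0 this
      have : σ b = σ a := by nlinarith [hσ a, hσ b]
      rw [this]
      ring
  have hUeq : Ut = U * w := by
    have e1 : Ut * (D * D) = U * w * (D * D) := by
      calc Ut * (D * D) = Ut * D * D * (Utᵀ * Ut) := by
            rw [hUt, Matrix.mul_one]; simp only [Matrix.mul_assoc]
      _ = (Ut * D * D * Utᵀ) * Ut := by simp only [Matrix.mul_assoc]
      _ = (U * D * D * Uᵀ) * Ut := by rw [hC]
      _ = U * ((D * D) * w) := by simp only [Matrix.mul_assoc, hwdef]
      _ = U * (w * (D * D)) := by rw [← hcomm2]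
      _ = U * w * (D * D) := by simp only [Matrix.mul_assoc]
    have h1 := congrArg (fun Z => Z * E) e1
    simp only [Matrix.mul_assoc] at h1
    rw [hDE, Matrix.mul_one] at h1
    have h2 := congrArg (fun Z => Z * E) h1
    simp only [Matrix.mul_assoc] at h2
    rw [hDE, Matrix.mul_one, Matrix.mul_one] at h2
    exact h2
  have hw : wᵀ * w = 1 := by
    calc wᵀ * w = wᵀ * ((Uᵀ * U) * w) := by rw [hU, Matrix.one_mul]
    _ = (wᵀ * Uᵀ) * (U * w) := by simp only [Matrix.mul_assoc]
    _ = (U * w)ᵀ * (U * w) := by rw [transpose_mul U w]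
    _ = Utᵀ * Ut := by rw [← hUeq]
    _ = 1 := hUt
  refine ⟨w, hw, hcomm, hUeq, ?_⟩
  have e3 : U * D * M = U * D * (w * Mt) := by
    calc U * D * M = Ut * D * Mt := heq
    _ = U * w * D * Mt := by rw [hUeq]
    _ = U * (w * D) * Mt := by simp only [Matrix.mul_assoc]
    _ = U * (D * w) * Mt := by rw [hcomm]
    _ = U * D * (w * Mt) := by simp only [Matrix.mul_assoc]
  have h1 := congrArg (fun Z => Uᵀ * Z) e3
  simp only [← Matrix.mul_assoc] at h1
  rw [hU, Matrix.one_mul] at h1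
  have h2 := congrArg (fun Z => E * Z) h1
  simp only [← Matrix.mul_assoc] at h2
  rw [hED, Matrix.one_mul, Matrix.one_mul] at h2
  rw [h2, ← Matrix.mul_assoc, hw, Matrix.one_mul]
end aux

lemma mul_runf {nn k0 k1 k2 : ℕ} (X : Matrix (Fin k0) (Fin k1) ℝ)
    (H : Fin nn → Matrix (Fin k1) (Fin k2) ℝ) :
    X * runf H = runf (fun j => X * H j) := by
  ext i p
  simp [runf, Matrix.mul_apply]

lemma lunf_mul {nn k1 k2 k3 : ℕ} (H : Fin nn → Matrix (Fin k1) (Fin k2) ℝ)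
    (Y : Matrix (Fin k2) (Fin k3) ℝ) :
    lunf H * Y = lunf (fun j => H j * Y) := by
  ext p k
  simp [lunf, Matrix.mul_apply]

theorem stmt7 (nL nN nR rL rR : ℕ) (A : Fin nL → Fin nN → Fin nR → ℝ)
    (sL : Fin rL → ℝ) (sR : Fin rR → ℝ)
    (hsL : ∀ a, 0 < sL a) (hsR : ∀ b, 0 < sR b)
    (QL : Matrix (Fin nL) (Fin rL) ℝ) (N : Fin nN → Matrix (Fin rL) (Fin rR) ℝ)
    (QR : Matrix (Fin rR) (Fin nR) ℝ)
    (QL' : Matrix (Fin nL) (Fin rL) ℝ) (N' : Fin nN → Matrix (Fin rL) (Fin rR) ℝ)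
    (QR' : Matrix (Fin rR) (Fin nR) ℝ)
    (h : IsStdRep A QL sL N sR QR) (h' : IsStdRep A QL' sL N' sR QR') :
    ∃ (w₁ : Matrix (Fin rL) (Fin rL) ℝ) (w₂ : Matrix (Fin rR) (Fin rR) ℝ),
      w₁ᵀ * w₁ = 1 ∧ w₂ᵀ * w₂ = 1 ∧
      w₁ * Matrix.diagonal sL = Matrix.diagonal sL * w₁ ∧
      w₂ * Matrix.diagonal sR = Matrix.diagonal sR * w₂ ∧
      QL' = QL * w₁ ∧ QR' = w₂ᵀ * QR ∧ ∀ j, N' j = w₁ᵀ * N j * w₂ := by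
  obtain ⟨hA, hQL, hM, hP, hQR⟩ := h
  obtain ⟨hA', hQL', hM', hP', hQR'⟩ := h'
  -- first truncated SVD (mode-1 matricization)
  have heq1 : QL * Matrix.diagonal sL * (runf fun j => N j * Matrix.diagonal sR * QR)
      = QL' * Matrix.diagonal sL * (runf fun j => N' j * Matrix.diagonal sR * QR') := by
    rw [mul_runf, mul_runf]
    ext l p
    simp only [runf, Matrix.of_apply]
    simp only [← Matrix.mul_assoc]
    exact (hA l p.1 p.2).symm.trans (hA' l p.1 p.2)
  obtain ⟨w₁, hw₁, hcomm₁, hQLeq, hMeq⟩ :=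
    svd_unique sL hsL QL QL' _ _ hQL hQL' hM hM' heq1
  -- second truncated SVD (mode-(1,2) matricization)
  have heq2 : (lunf fun j => QL * Matrix.diagonal sL * N j) * Matrix.diagonal sR * QR
      = (lunf fun j => QL' * Matrix.diagonal sL * N' j) * Matrix.diagonal sR * QR' := by
    rw [Matrix.mul_assoc, Matrix.mul_assoc, lunf_mul, lunf_mul]
    ext p k
    simp only [lunf, Matrix.of_apply]
    simp only [← Matrix.mul_assoc]
    exact (hA p.1 p.2 k).symm.trans (hA' p.1 p.2 k)
  obtain ⟨w₂, hw₂, hcomm₂, hPeq, hQReq⟩ :=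
    svd_unique sR hsR _ _ QR QR' hP hP' hQR hQR' heq2
  refine ⟨w₁, w₂, hw₁, hw₂, hcomm₁, hcomm₂, hQLeq, hQReq, ?_⟩
  intro j
  -- extract the per-slice relation from hMeq
  rw [mul_runf] at hMeq
  have hj : N' j * Matrix.diagonal sR * QR' = w₁ᵀ * (N j * Matrix.diagonal sR * QR) := by
    ext l k
    have := congrFun (congrFun hMeq l) (j, k)
    simpa [runf] using this
  rw [hQReq] at hj
  have h1 := congrArg (fun Z => Z * QRᵀ) hj
  simp only [Matrix.mul_assoc] at h1
  rw [hQR, Matrix.mul_one, Matrix.mul_one] at h1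
  -- h1 : N' j * (diagonal sR * w₂ᵀ) = w₁ᵀ * (N j * diagonal sR)
  have h2 := congrArg (fun Z => Z * w₂) h1
  simp only [Matrix.mul_assoc] at h2
  rw [hw₂, Matrix.mul_one] at h2
  -- h2 : N' j * diagonal sR = w₁ᵀ * (N j * (diagonal sR * w₂))
  rw [← hcomm₂] at h2
  have h3 := congrArg (fun Z => Z * Matrix.diagonal (fun b => (sR b)⁻¹)) h2
  simp only [Matrix.mul_assoc] at h3
  rw [diag_inv_right sR (fun b => (hsR b).ne'), Matrix.mul_one, Matrix.mul_one] at h3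
  rw [h3]
  simp only [Matrix.mul_assoc]
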